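/- Let X^{(1)},…,X^{(n)} and G^{(1)},…,G^{(n)} be fixed real matrices, where X^{(j)} and G^{(j)} are d_j × n, and set V^{(j)} = X^{(j)} − γ·G^{(j)} for a real γ. Let W^{(1)},…,W^{(n)} be independent random n×n matrices, each satisfying E[W^{(j)}] = α₁·I_n + (1−α₁)·A_n and E[W^{(j)}·A_n·(W^{(j)})ᵀ] = α₂·I_n + (1−α₂)·A_n. Define the update increment Δx̄ ∈ ℝ^{d_1+⋯+d_n} as the concatenation over j = 1,…,n of the blocks (V^{(j)}·W^{(j)} − X^{(j)})·(𝟙/n), and let ḡ be the concatenation over j of G^{(j)}·(𝟙/n). Then E‖Δx̄‖² = (α₂/n)·∑_{j=1}^n Tr( V^{(j)}·(I_n − A_n)·(V^{(j)})ᵀ ) + γ²·‖ḡ‖², and E[Δx̄] = −γ·ḡ. -/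

import Mathlib

open MeasureTheory ProbabilityTheory Matrix

/-- Measurable-space structure on matrices (entrywise). -/
instance matrixMeasurableSpace {m n α : Type*} [MeasurableSpace α] :
    MeasurableSpace (Matrix m n α) := by unfold Matrix; infer_instance

/-- The `n × n` matrix `A_n = (1/n)·𝟙𝟙ᵀ` with all entries `1/n`. -/
noncomputable def stdA (n : ℕ) : Matrix (Fin n) (Fin n) ℝ := Matrix.of fun _ _ => (1 : ℝ) / n


lemma mul_int {Ω : Type*} [MeasurableSpace Ω] {μ : Measure Ω} {f g : Ω → ℝ}
    (hf : MemLp f 2 μ) (hg : MemLp g 2 μ) : Integrable (fun ω => f ω * g ω) μ := by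
  have h := ((hf.add hg).integrable_sq.sub hf.integrable_sq).sub hg.integrable_sq
  have he : (fun ω => f ω * g ω) = fun ω => (((f ω + g ω) ^ 2 - f ω ^ 2) - g ω ^ 2) / 2 := by
    funext ω; ring
  rw [he]; exact h.div_const 2

lemma aux {Ω : Type*} [MeasurableSpace Ω] {μ : Measure Ω} [IsProbabilityMeasure μ]
    {n d : ℕ} (hn : 1 ≤ n) (γ α₁ α₂ : ℝ)
    (X G V : Matrix (Fin d) (Fin n) ℝ) (hV : V = X - γ • G)
    (W : Ω → Matrix (Fin n) (Fin n) ℝ)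
    (hWL2 : ∀ a b, MemLp (fun ω => W ω a b) 2 μ)
    (hW1 : (Matrix.of fun a b => ∫ ω, W ω a b ∂μ) =
        α₁ • (1 : Matrix (Fin n) (Fin n) ℝ) + (1 - α₁) • stdA n)
    (hW2 : (Matrix.of fun a b => ∫ ω, (W ω * stdA n * (W ω)ᵀ) a b ∂μ) =
        α₂ • (1 : Matrix (Fin n) (Fin n) ℝ) + (1 - α₂) • stdA n)
    (k : Fin d) :
    Integrable (fun ω => ((V * W ω - X).mulVec fun _ => (1 : ℝ) / n) k ^ 2) μ ∧
    (∫ ω, ((V * W ω - X).mulVec fun _ => (1 : ℝ) / n) k ^ 2 ∂μ)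
      = (α₂ / n) * ((V * ((1 : Matrix (Fin n) (Fin n) ℝ) - stdA n) * Vᵀ) k k)
        + γ ^ 2 * ((G.mulVec fun _ => (1 : ℝ) / n) k) ^ 2 ∧
    (∫ ω, ((V * W ω - X).mulVec fun _ => (1 : ℝ) / n) k ∂μ)
      = -γ * ((G.mulVec fun _ => (1 : ℝ) / n) k) := by
  have hn0 : (0 : ℝ) < n := by exact_mod_cast hn
  set Y : Fin n → Ω → ℝ := fun a ω => ∑ b, W ω a b * ((1 : ℝ) / n) with hY
  have hYL2 : ∀ a, MemLp (Y a) 2 μ := by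
    intro a
    exact memLp_finset_sum _ fun b _ => by
      simpa [mul_comm] using (hWL2 a b).const_mul ((1 : ℝ) / n)
  have hYint : ∀ a, Integrable (Y a) μ := fun a => (hYL2 a).integrable one_le_two
  have hW1' : ∀ a b, (∫ ω, W ω a b ∂μ) =
      α₁ * (if a = b then 1 else 0) + (1 - α₁) * ((1 : ℝ) / n) := by
    intro a b
    have := congrFun (congrFun hW1 a) b
    simpa [Matrix.add_apply, Matrix.smul_apply, Matrix.one_apply, stdA, smul_eq_mul] using this
  have hW2' : ∀ a b, (∫ ω, (W ω * stdA n * (W ω)ᵀ) a b ∂μ) =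
      α₂ * (if a = b then 1 else 0) + (1 - α₂) * ((1 : ℝ) / n) := by
    intro a b
    have := congrFun (congrFun hW2 a) b
    simpa [Matrix.add_apply, Matrix.smul_apply, Matrix.one_apply, stdA, smul_eq_mul] using this
  have hEY : ∀ a, (∫ ω, Y a ω ∂μ) = (1 : ℝ) / n := by
    intro a
    rw [hY]
    rw [integral_finset_sum _ fun b _ =>
      ((hWL2 a b).integrable one_le_two).mul_const _]
    simp only [integral_mul_const, hW1', add_mul, mul_ite, mul_one, mul_zero, ite_mul, zero_mul,
      Finset.sum_add_distrib, Finset.sum_ite_eq, Finset.mem_univ, if_true, Finset.sum_const,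
      Finset.card_univ, Fintype.card_fin, nsmul_eq_mul]
    field_simp
    ring
  have hpt : ∀ a a' ω, Y a ω * Y a' ω = ((1 : ℝ) / n) * (W ω * stdA n * (W ω)ᵀ) a a' := by
    intro a a' ω
    have e1 : ∀ v : Fin n → ℝ, (∑ b, v b * ((1 : ℝ) / n)) = (∑ b, v b) / n := by
      intro v; rw [Finset.sum_div]; simp only [mul_one_div]
    simp only [hY, Matrix.mul_apply, Matrix.transpose_apply, stdA, Matrix.of_apply, e1]
    rw [← Finset.mul_sum]
    field_simp
  have hEYY : ∀ a a', (∫ ω, Y a ω * Y a' ω ∂μ) =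
      ((1 : ℝ) / n) * (α₂ * (if a = a' then 1 else 0) + (1 - α₂) * ((1 : ℝ) / n)) := by
    intro a a'
    simp only [hpt]
    rw [integral_const_mul, hW2']
  set c : ℝ := ∑ b, X k b * ((1 : ℝ) / n) with hc
  set g : ℝ := (G.mulVec fun _ => (1 : ℝ) / n) k with hg
  set f : Ω → ℝ := fun ω => ∑ a, V k a * Y a ω with hf
  have hΔeq : ∀ ω, ((V * W ω - X).mulVec fun _ => (1 : ℝ) / n) k = f ω - c := by
    intro ω
    simp only [Matrix.mulVec, dotProduct, Matrix.sub_apply, Matrix.mul_apply, hf, hc,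
      sub_mul, hY]
    rw [Finset.sum_sub_distrib]
    congr 1
    simp only [Finset.sum_mul, Finset.mul_sum]
    rw [Finset.sum_comm]
    exact Finset.sum_congr rfl fun a _ => Finset.sum_congr rfl fun b _ => by ring
  have hfL2 : MemLp f 2 μ := memLp_finset_sum _ fun a _ => (hYL2 a).const_mul _
  have hfint : Integrable f μ := hfL2.integrable one_le_two
  have hEf : (∫ ω, f ω ∂μ) = (∑ a, V k a) * ((1 : ℝ) / n) := by
    rw [hf, integral_finset_sum _ fun a _ => (hYint a).const_mul _]
    simp only [integral_const_mul, hEY]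
    rw [Finset.sum_mul]
  have key0 : (∑ a, V k a) * ((1 : ℝ) / n) - c = -γ * g := by
    subst hV
    simp only [hc, hg, Matrix.mulVec, dotProduct, Matrix.sub_apply, Matrix.smul_apply,
      smul_eq_mul, sub_mul, Finset.sum_sub_distrib, Finset.sum_mul, neg_mul, Finset.mul_sum]
    rw [show ∀ A B : ℝ, A - B - A = -B from fun A B => by ring]
    rw [← Finset.sum_neg_distrib]
    exact Finset.sum_congr rfl fun x _ => by ring
  -- second moment of f
  have hEf2 : (∫ ω, f ω ^ 2 ∂μ) =
      (α₂ / n) * (∑ a, (V k a) ^ 2) + (1 - α₂) * ((∑ a, V k a) * ((1 : ℝ) / n)) ^ 2 := by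
    have hf2pt : ∀ ω, f ω ^ 2 = ∑ a, ∑ a', (V k a * V k a') * (Y a ω * Y a' ω) := by
      intro ω
      rw [hf, sq, Finset.sum_mul_sum]
      exact Finset.sum_congr rfl fun a _ => Finset.sum_congr rfl fun a' _ => by ring
    simp only [hf2pt]
    rw [integral_finset_sum _ fun a _ => integrable_finset_sum _ fun a' _ =>
      (mul_int (hYL2 a) (hYL2 a')).const_mul _]
    rw [Finset.sum_congr rfl fun a _ => integral_finset_sum _ fun a' _ =>
      (mul_int (hYL2 a) (hYL2 a')).const_mul _]
    simp only [integral_const_mul, hEYY]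
    have expand : ∀ a a' : Fin n,
        V k a * V k a' * (((1 : ℝ) / n) * (α₂ * (if a = a' then 1 else 0) + (1 - α₂) * ((1 : ℝ) / n)))
        = (if a = a' then V k a * V k a' * (α₂ * ((1 : ℝ) / n)) else 0)
          + V k a * V k a' * ((1 - α₂) * ((1 : ℝ) / n) * ((1 : ℝ) / n)) := by
      intro a a'
      by_cases h : a = a'
      · rw [if_pos h, if_pos h]; ring
      · rw [if_neg h, if_neg h]; ring
    simp only [expand, Finset.sum_add_distrib]
    congr 1
    · rw [Finset.mul_sum]
      refine Finset.sum_congr rfl fun a _ => ?_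
      rw [Finset.sum_ite_eq]
      simp only [Finset.mem_univ, if_true]
      ring
    · have inner : ∀ a : Fin n,
          (∑ a', V k a * V k a' * ((1 - α₂) * ((1 : ℝ) / n) * ((1 : ℝ) / n)))
          = V k a * (∑ a', V k a') * ((1 - α₂) * ((1 : ℝ) / n) * ((1 : ℝ) / n)) := by
        intro a; rw [← Finset.sum_mul, ← Finset.mul_sum]
      simp only [inner]
      rw [← Finset.sum_mul, ← Finset.sum_mul]
      ring
  -- trace entry
  have htr : (V * ((1 : Matrix (Fin n) (Fin n) ℝ) - stdA n) * Vᵀ) k k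
      = (∑ a, (V k a) ^ 2) - ((∑ a, V k a) * ((1 : ℝ) / n)) * (∑ a, V k a) := by
    simp only [Matrix.mul_apply, Matrix.sub_apply, Matrix.one_apply, Matrix.transpose_apply,
      stdA, Matrix.of_apply, mul_sub, mul_ite, mul_one, mul_zero, Finset.sum_sub_distrib,
      Finset.sum_ite_eq', Finset.mem_univ, if_true, sub_mul]
    congr 1
    · exact Finset.sum_congr rfl fun a _ => (pow_two (V k a)).symm
    · rw [← Finset.mul_sum, ← Finset.sum_mul]
  -- main computations
  have hΔL2 : MemLp (fun ω => f ω - c) 2 μ := hfL2.sub (memLp_const c)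
  have hint2 : Integrable (fun ω => (f ω - c) ^ 2) μ := hΔL2.integrable_sq
  have hfunrw : (fun ω => ((V * W ω - X).mulVec fun _ => (1 : ℝ) / n) k) = fun ω => f ω - c :=
    funext hΔeq
  have hEsq : (∫ ω, (f ω - c) ^ 2 ∂μ)
      = (∫ ω, f ω ^ 2 ∂μ) - 2 * c * (∫ ω, f ω ∂μ) + c ^ 2 := by
    have hpt2 : ∀ ω : Ω, (f ω - c) ^ 2 = (f ω ^ 2 - 2 * c * f ω) + c ^ 2 := fun ω => by ring
    simp only [hpt2]
    have h2c : Integrable (fun ω => 2 * c * f ω) μ := hfint.const_mul (2 * c)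
    have hsub : Integrable (fun ω => f ω ^ 2 - 2 * c * f ω) μ := hfL2.integrable_sq.sub h2c
    rw [integral_add hsub (integrable_const _),
      integral_sub hfL2.integrable_sq h2c, integral_const_mul, integral_const]
    simp [measure_univ]
  refine ⟨?_, ?_, ?_⟩
  · simp only [hΔeq]; exact hint2
  · simp only [hΔeq]
    rw [hEsq, hEf2, hEf, htr]
    have hγg : γ * g = c - (∑ a, V k a) * ((1 : ℝ) / n) := by linarith [key0]
    have h2 : γ ^ 2 * g ^ 2 = (c - (∑ a, V k a) * ((1 : ℝ) / n)) ^ 2 := by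
      rw [← hγg]; ring
    rw [h2]
    field_simp
    ring
  · simp only [hΔeq]
    rw [integral_sub hfint (integrable_const c), integral_const, hEf]
    simp only [measure_univ, probReal_univ, ENNReal.toReal_one, smul_eq_mul, one_mul]
    rw [← key0]

/-- Let `X j, G j` be fixed `d_j × n` real matrices, `V j = X j − γ·G j`.
Let `W j` be independent random `n × n` matrices with `E[W j] = α₁I + (1−α₁)A_n` and
`E[W j · A_n · (W j)ᵀ] = α₂I + (1−α₂)A_n`.  Let `Δ` be the concatenation over `j` of the
blocks `(V j · W j − X j)·(𝟙/n)` and `ḡ` the concatenation of `G j·(𝟙/n)`.  Then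
`E‖Δ‖² = (α₂/n)·∑ j Tr(V j (I−A_n) (V j)ᵀ) + γ²‖ḡ‖²` and `E[Δ] = −γ·ḡ`. -/
theorem statement3 {Ω : Type*} [MeasurableSpace Ω] {μ : Measure Ω} [IsProbabilityMeasure μ]
    {n : ℕ} (hn : 1 ≤ n) (dd : Fin n → ℕ) (γ α₁ α₂ : ℝ)
    (hα₂ : 0 < α₂) (hα₁₂ : α₂ < α₁) (hα₁ : α₁ < 1)
    (X G : (j : Fin n) → Matrix (Fin (dd j)) (Fin n) ℝ)
    (V : (j : Fin n) → Matrix (Fin (dd j)) (Fin n) ℝ)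
    (hV : ∀ j, V j = X j - γ • G j)
    (W : Fin n → Ω → Matrix (Fin n) (Fin n) ℝ)
    (hWmeas : ∀ j, Measurable (W j))
    (hWL2 : ∀ j a b, MemLp (fun ω => W j ω a b) 2 μ)
    (hindep : iIndepFun W μ)
    (hW1 : ∀ j, (Matrix.of fun a b => ∫ ω, W j ω a b ∂μ) =
        α₁ • (1 : Matrix (Fin n) (Fin n) ℝ) + (1 - α₁) • stdA n)
    (hW2 : ∀ j, (Matrix.of fun a b => ∫ ω, (W j ω * stdA n * (W j ω)ᵀ) a b ∂μ) =
        α₂ • (1 : Matrix (Fin n) (Fin n) ℝ) + (1 - α₂) • stdA n)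
    (Δ : (j : Fin n) → Fin (dd j) → Ω → ℝ)
    (hΔ : ∀ j k ω, Δ j k ω = ((V j * W j ω - X j).mulVec fun _ => (1 : ℝ) / n) k)
    (gbar : (j : Fin n) → Fin (dd j) → ℝ)
    (hgbar : ∀ j, gbar j = (G j).mulVec fun _ => (1 : ℝ) / n) :
    (∫ ω, ∑ j, ∑ k, Δ j k ω ^ 2 ∂μ) =
        (α₂ / n) * ∑ j, Matrix.trace (V j * ((1 : Matrix (Fin n) (Fin n) ℝ) - stdA n) * (V j)ᵀ)
          + γ ^ 2 * ∑ j, ∑ k, gbar j k ^ 2 ∧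
      ∀ j k, (∫ ω, Δ j k ω ∂μ) = -γ * gbar j k := by
  have haux := fun j k => aux (μ := μ) hn γ α₁ α₂ (X j) (G j) (V j) (hV j) (W j)
    (hWL2 j) (hW1 j) (hW2 j) k
  constructor
  · have hint : ∀ j k, Integrable (fun ω => Δ j k ω ^ 2) μ := by
      intro j k
      simp only [hΔ]
      exact (haux j k).1
    rw [integral_finset_sum _ fun j _ => integrable_finset_sum _ fun k _ => hint j k]
    rw [Finset.sum_congr rfl fun j _ => integral_finset_sum _ fun k _ => hint j k]
    have hval : ∀ j k, (∫ ω, Δ j k ω ^ 2 ∂μ)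
        = (α₂ / n) * ((V j * ((1 : Matrix (Fin n) (Fin n) ℝ) - stdA n) * (V j)ᵀ) k k)
          + γ ^ 2 * gbar j k ^ 2 := by
      intro j k
      simp only [hΔ, hgbar]
      exact (haux j k).2.1
    simp only [hval, Finset.sum_add_distrib, Matrix.trace, Matrix.diag, Finset.mul_sum]
  · intro j k
    simp only [hΔ, hgbar]
    exact (haux j k).2.2
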